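/- Let L be an n×n real matrix, K symmetric positive definite, A = L − λI, and K_N(λ) = K − K Aᵀ (A K Aᵀ)⁺ A K. Then the trace of K_N(λ) is strictly positive if and only if λ is an eigenvalue of L. -/

import Mathlib

open Matrix Real

/-- The four Penrose conditions characterizing the Moore-Penrose pseudoinverse. -/
def IsMoorePenrose {m n : Type*} [Fintype m] [Fintype n]
    (Q : Matrix m n ℝ) (Qp : Matrix n m ℝ) : Prop :=
  Q * Qp * Q = Q ∧ Qp * Q * Qp = Qp ∧ (Q * Qp)ᵀ = Q * Qp ∧ (Qp * Q)ᵀ = Qp * Q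

lemma mp_unique {n : Type*} [Fintype n] [DecidableEq n]
    (M W1 W2 : Matrix n n ℝ) (h1 : IsMoorePenrose M W1) (h2 : IsMoorePenrose M W2) :
    W1 = W2 := by
  obtain ⟨a1, b1, c1, d1⟩ := h1
  obtain ⟨a2, b2, c2, d2⟩ := h2
  have hMW : M * W1 = M * W2 := by
    calc M * W1 = (M * W1)ᵀ := c1.symm
      _ = ((M * W2 * M) * W1)ᵀ := by rw [a2]
      _ = (M * W1)ᵀ * (M * W2)ᵀ := by
          rw [← transpose_mul]; simp only [Matrix.mul_assoc]
      _ = (M * W1) * (M * W2) := by rw [c1, c2]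
      _ = (M * W1 * M) * W2 := by simp only [Matrix.mul_assoc]
      _ = M * W2 := by rw [a1]
  have hWM : W1 * M = W2 * M := by
    calc W1 * M = (W1 * M)ᵀ := d1.symm
      _ = (W1 * (M * W2 * M))ᵀ := by rw [a2]
      _ = (W2 * M)ᵀ * (W1 * M)ᵀ := by
          rw [← transpose_mul]; simp only [Matrix.mul_assoc]
      _ = (W2 * M) * (W1 * M) := by rw [d1, d2]
      _ = W2 * (M * W1 * M) := by simp only [Matrix.mul_assoc]
      _ = W2 * M := by rw [a1]
  calc W1 = W1 * M * W1 := b1.symm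
    _ = W1 * M * W2 := by rw [Matrix.mul_assoc, Matrix.mul_assoc, ← hMW]
    _ = W2 * M * W2 := by rw [hWM]
    _ = W2 := b2

lemma mp_symm {n : Type*} [Fintype n] [DecidableEq n]
    (M W : Matrix n n ℝ) (hM : Mᵀ = M) (h : IsMoorePenrose M W) : Wᵀ = W := by
  refine mp_unique M Wᵀ W ?_ h
  obtain ⟨a, b, c, d⟩ := h
  refine ⟨?_, ?_, ?_, ?_⟩
  · calc M * Wᵀ * M = (M * W * M)ᵀ := by simp [transpose_mul, hM, Matrix.mul_assoc]
      _ = M := by rw [a, hM]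
  · calc Wᵀ * M * Wᵀ = (W * M * W)ᵀ := by simp [transpose_mul, hM, Matrix.mul_assoc]
      _ = Wᵀ := by rw [b]
  · calc (M * Wᵀ)ᵀ = W * Mᵀ := by simp [transpose_mul]
      _ = W * M := by rw [hM]
      _ = (W * M)ᵀ := d.symm
      _ = Mᵀ * Wᵀ := by simp [transpose_mul]
      _ = M * Wᵀ := by rw [hM]
  · calc (Wᵀ * M)ᵀ = Mᵀ * W := by simp [transpose_mul]
      _ = M * W := by rw [hM]
      _ = (M * W)ᵀ := c.symm
      _ = Wᵀ * Mᵀ := by simp [transpose_mul]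
      _ = Wᵀ * M := by rw [hM]

theorem trace_pos_iff_eigenvalue {n : Type*} [Fintype n] [DecidableEq n]
    (L K W : Matrix n n ℝ) (lam : ℝ) (hK : K.PosDef)
    (hW : IsMoorePenrose ((L - lam • 1) * K * (L - lam • 1)ᵀ) W) :
    0 < (K - K * (L - lam • 1)ᵀ * W * (L - lam • 1) * K).trace ↔
      ∃ v : n → ℝ, v ≠ 0 ∧ L *ᵥ v = lam • v := by
  set A := L - lam • 1 with hA
  have hKt : Kᵀ = K := by
    rw [← conjTranspose_eq_transpose_of_trivial]; exact hK.1
  have hMt : (A * K * Aᵀ)ᵀ = A * K * Aᵀ := by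
    simp [transpose_mul, hKt, Matrix.mul_assoc]
  have hWt : Wᵀ = W := mp_symm _ _ hMt hW
  -- eigen condition ↔ A *ᵥ v = 0
  have heig : ∀ v : n → ℝ, (A *ᵥ v = 0) ↔ L *ᵥ v = lam • v := by
    intro v
    rw [hA, sub_mulVec, smul_mulVec, one_mulVec, sub_eq_zero]
  constructor
  · intro htr
    by_contra hno
    push_neg at hno
    have hdetA : A.det ≠ 0 := by
      intro h0
      obtain ⟨v, hv0, hv⟩ := (Matrix.exists_mulVec_eq_zero_iff).2 h0
      exact hno v hv0 ((heig v).1 hv)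
    have hdetAt : Aᵀ.det ≠ 0 := by rwa [det_transpose]
    have hdetK : K.det ≠ 0 := ne_of_gt hK.det_pos
    have hM : IsUnit (A * K * Aᵀ).det := by
      simp only [det_mul]
      exact ((isUnit_iff_ne_zero.2 hdetA).mul (isUnit_iff_ne_zero.2 hdetK)).mul
        (isUnit_iff_ne_zero.2 hdetAt)
    have hWinv : W = (A * K * Aᵀ)⁻¹ := by
      have h1 := hW.1
      calc W = ((A * K * Aᵀ)⁻¹ * (A * K * Aᵀ)) * W * ((A * K * Aᵀ) * (A * K * Aᵀ)⁻¹) := by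
            rw [Matrix.nonsing_inv_mul _ hM, Matrix.mul_nonsing_inv _ hM,
              Matrix.one_mul, Matrix.mul_one]
        _ = (A * K * Aᵀ)⁻¹ * (A * K * Aᵀ * W * (A * K * Aᵀ)) * (A * K * Aᵀ)⁻¹ := by
            simp only [Matrix.mul_assoc]
        _ = (A * K * Aᵀ)⁻¹ * (A * K * Aᵀ) * (A * K * Aᵀ)⁻¹ := by
            rw [h1]
        _ = (A * K * Aᵀ)⁻¹ := by
            rw [Matrix.nonsing_inv_mul _ hM, Matrix.one_mul]
    have hzero : K - K * Aᵀ * W * A * K = 0 := by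
      rw [hWinv, Matrix.mul_inv_rev, Matrix.mul_inv_rev]
      have e1 : Aᵀ * (Aᵀ)⁻¹ = 1 := Matrix.mul_nonsing_inv _ (isUnit_iff_ne_zero.2 hdetAt)
      have e2 : A⁻¹ * A = 1 := Matrix.nonsing_inv_mul _ (isUnit_iff_ne_zero.2 hdetA)
      have e3 : K * K⁻¹ = 1 := Matrix.mul_nonsing_inv _ (isUnit_iff_ne_zero.2 hdetK)
      calc K - K * Aᵀ * ((Aᵀ)⁻¹ * (K⁻¹ * A⁻¹)) * A * K
          = K - K * (Aᵀ * (Aᵀ)⁻¹) * K⁻¹ * (A⁻¹ * A) * K := by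
            simp only [Matrix.mul_assoc]
        _ = K - (K * K⁻¹) * K := by rw [e1, e2]; simp only [Matrix.mul_one, Matrix.mul_assoc]
        _ = 0 := by rw [e3, Matrix.one_mul, sub_self]
    rw [hzero] at htr
    simp at htr
  · rintro ⟨v, hv0, hv⟩
    have hAv : A *ᵥ v = 0 := (heig v).2 hv
    set S : Matrix n n ℝ := 1 - K * Aᵀ * W * A with hS
    have hfact : K - K * Aᵀ * W * A * K = S * K * Sᵀ := by
      have h2 : W * (A * K * Aᵀ) * W = W := hW.2.1
      have h3 : K * Aᵀ * W * A * K * Aᵀ * W = K * Aᵀ * W := by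
        have := congrArg (fun X => K * Aᵀ * X) h2
        simpa [Matrix.mul_assoc] using this
      have hSt : Sᵀ = 1 - Aᵀ * W * A * K := by
        simp [hS, transpose_mul, hWt, hKt, Matrix.mul_assoc]
      rw [hSt, hS]
      simp only [Matrix.sub_mul, Matrix.mul_sub, Matrix.one_mul, Matrix.mul_one]
      have h4 : K * Aᵀ * W * A * K * (Aᵀ * W * A * K) = K * Aᵀ * W * A * K := by
        calc K * Aᵀ * W * A * K * (Aᵀ * W * A * K)
            = (K * Aᵀ * W * A * K * Aᵀ * W) * A * K := by simp only [Matrix.mul_assoc]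
          _ = K * Aᵀ * W * A * K := by rw [h3]
      rw [show K * (Aᵀ * W * A * K) = K * Aᵀ * W * A * K by simp only [Matrix.mul_assoc], h4]
      try abel
    rw [hfact]
    have hSv : S *ᵥ v = v := by
      rw [hS, sub_mulVec, one_mulVec]
      have : (K * Aᵀ * W * A) *ᵥ v = (K * Aᵀ * W) *ᵥ (A *ᵥ v) := by
        rw [← mulVec_mulVec]
      rw [this, hAv, mulVec_zero, sub_zero]
    obtain ⟨i, hi⟩ : ∃ i, v i ≠ 0 := by
      by_contra h
      push_neg at h
      exact hv0 (funext h)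
    have hSrow : (fun j => S i j) ≠ 0 := by
      intro h0
      have : (S *ᵥ v) i = 0 := by
        simp only [Matrix.mulVec, dotProduct]
        refine Finset.sum_eq_zero fun j _ => ?_
        rw [show S i j = 0 from congrFun h0 j, zero_mul]
      rw [hSv] at this
      exact hi this
    have hdiag : ∀ k, (S * K * Sᵀ) k k = (fun j => S k j) ⬝ᵥ K *ᵥ (fun j => S k j) := by
      intro k
      simp [Matrix.mul_apply, Matrix.mulVec, dotProduct, Matrix.transpose_apply,
        Finset.mul_sum, Finset.sum_mul]
      rw [Finset.sum_comm]
      congr 1; ext j; congr 1; ext l; ring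
    rw [Matrix.trace]
    refine Finset.sum_pos' (fun k _ => ?_) ⟨i, Finset.mem_univ i, ?_⟩
    · rw [Matrix.diag, hdiag k]
      have := hK.posSemidef.dotProduct_mulVec_nonneg (fun j => S k j)
      simpa using this
    · rw [Matrix.diag, hdiag i]
      have := hK.dotProduct_mulVec_pos (x := fun j => S i j) hSrow
      simpa using this
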